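/- (Part of proof of Theorem 2.) Let w⁽ᵐ⁾ be a sequence in W such that for some edge ij of T, lim_{m→∞} (w_i⁽ᵐ⁾ + w_j⁽ᵐ⁾) = −log cosh(l⁰_ij/2) (equivalently lim_{m→∞} l_ij(w⁽ᵐ⁾) = 0). Then for any face ijk containing the edge ij, lim_{m→∞} θ^i_jk(w⁽ᵐ⁾) = +∞, and consequently lim_{m→∞} B_i(w⁽ᵐ⁾) = +∞. -/

import Mathlib

open Real Filter Set

/-- Inverse hyperbolic cosine. -/
noncomputable def arcosh (x : ℝ) : ℝ := Real.log (x + Real.sqrt (x ^ 2 - 1))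

/-- The length of the side of a right-angled hyperbolic hexagon opposite the side of
length `x`, where the three pairwise non-adjacent sides have lengths `x, y, z`. -/
noncomputable def theta (x y z : ℝ) : ℝ :=
  _root_.arcosh ((Real.cosh x + Real.cosh y * Real.cosh z) / (Real.sinh y * Real.sinh z))

/-- Combinatorial data of an ideally triangulated compact surface with `n` boundary
components, together with a fixed hyperbolic metric `l⁰` assigning a positive length
to each edge.  Boundary components are indexed by `Fin n`; each face is a triple of
pairwise distinct boundary indices; every boundary index occurs in at least one face. -/
structure IdealTriangulatedSurface (n : ℕ) where
  /-- The set of faces (ideal triangles), each recorded by the triple of boundary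
  components it meets. -/
  F : Finset (Fin n × Fin n × Fin n)
  /-- The three boundary indices of a face are pairwise distinct. -/
  distinct : ∀ f ∈ F, f.1 ≠ f.2.1 ∧ f.2.1 ≠ f.2.2 ∧ f.2.2 ≠ f.1
  /-- Every boundary component meets some face. -/
  covers : ∀ i : Fin n, ∃ f ∈ F, i = f.1 ∨ i = f.2.1 ∨ i = f.2.2
  /-- The fixed hyperbolic metric: the length `l⁰_ij > 0` of the edge `ij`. -/
  l0 : Fin n → Fin n → ℝ
  l0_symm : ∀ i j, l0 i j = l0 j i
  l0_pos : ∀ i j, 0 < l0 i j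

namespace IdealTriangulatedSurface

variable {n : ℕ} (S : IdealTriangulatedSurface n)

/-- `i j` is an edge of the ideal triangulation: `i ≠ j` and some face contains
both boundary indices `i` and `j`. -/
def IsEdge (i j : Fin n) : Prop :=
  i ≠ j ∧ ∃ f ∈ S.F, (i = f.1 ∨ i = f.2.1 ∨ i = f.2.2) ∧ (j = f.1 ∨ j = f.2.1 ∨ j = f.2.2)

/-- The space `W` of combinatorial conformal factors: those `w : Fin n → ℝ` with
`w_i + w_j > −log cosh (l⁰_ij / 2)` for every edge `ij`, i.e. those for which every
deformed edge length `l_ij(w)` is defined and positive. -/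
def W : Set (Fin n → ℝ) :=
  {w | ∀ i j : Fin n, S.IsEdge i j →
    -Real.log (Real.cosh (S.l0 i j / 2)) < w i + w j}

/-- The deformed edge length `l_ij(w)`, defined by
`cosh (l_ij(w)/2) = e^{w_i + w_j} cosh (l⁰_ij/2)`. -/
noncomputable def len (w : Fin n → ℝ) (i j : Fin n) : ℝ :=
  2 * _root_.arcosh (Real.exp (w i + w j) * Real.cosh (S.l0 i j / 2))

/-- `θ^i_jk(w)`: the length of the boundary arc on boundary component `i` of the
right-angled hexagon realizing the face `ijk` in the metric determined by `w`. -/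
noncomputable def thetaF (w : Fin n → ℝ) (i j k : Fin n) : ℝ :=
  theta (S.len w j k) (S.len w k i) (S.len w i j)

/-- `B_i(w)`: the length of the boundary component `i`, the sum over all faces
containing `i` of the boundary arc `θ^i` of that face. -/
noncomputable def Blen (w : Fin n → ℝ) (i : Fin n) : ℝ :=
  ∑ f ∈ S.F,
    ((if i = f.1 then S.thetaF w f.1 f.2.1 f.2.2 else 0)
      + (if i = f.2.1 then S.thetaF w f.2.1 f.2.2 f.1 else 0)
      + (if i = f.2.2 then S.thetaF w f.2.2 f.1 f.2.1 else 0))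

end IdealTriangulatedSurface

section Aux

lemma arcosh_nonneg {x : ℝ} (hx : 1 ≤ x) : 0 ≤ _root_.arcosh x := by
  apply Real.log_nonneg
  have := Real.sqrt_nonneg (x ^ 2 - 1)
  linarith

lemma arcosh_pos {x : ℝ} (hx : 1 < x) : 0 < _root_.arcosh x := by
  apply Real.log_pos
  have := Real.sqrt_nonneg (x ^ 2 - 1)
  linarith

lemma arcosh_tendsto_atTop : Tendsto _root_.arcosh atTop atTop := by
  refine tendsto_atTop_mono' atTop ?_ Real.tendsto_log_atTop
  filter_upwards [eventually_ge_atTop (1 : ℝ)] with x hx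
  unfold _root_.arcosh
  have h0 : (0:ℝ) < x := by linarith
  have := Real.sqrt_nonneg (x ^ 2 - 1)
  exact Real.log_le_log h0 (by linarith)

lemma continuousAt_arcosh_one : ContinuousAt _root_.arcosh 1 := by
  unfold _root_.arcosh
  apply ContinuousAt.log
  · exact continuousAt_id.add (Real.continuous_sqrt.continuousAt.comp (by fun_prop))
  · simp

lemma arcosh_one : _root_.arcosh 1 = 0 := by simp [_root_.arcosh]

lemma theta_nonneg {x y z : ℝ} (hy : 0 < y) (hz : 0 < z) : 0 ≤ theta x y z := by
  have hsy : 0 < Real.sinh y := Real.sinh_pos_iff.2 hy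
  have hsz : 0 < Real.sinh z := Real.sinh_pos_iff.2 hz
  apply _root_.arcosh_nonneg
  rw [le_div_iff₀ (by positivity)]
  have h1 := Real.cosh_sub y z
  have h2 := Real.one_le_cosh (y - z)
  have h3 := Real.one_le_cosh x
  nlinarith

namespace IdealTriangulatedSurface

variable {n : ℕ} (S : IdealTriangulatedSurface n)

lemma isEdge_symm {i j : Fin n} (h : S.IsEdge i j) : S.IsEdge j i := by
  obtain ⟨hne, f, hf, hi, hj⟩ := h
  exact ⟨hne.symm, f, hf, hj, hi⟩

lemma edges_of_face {f : Fin n × Fin n × Fin n} (hf : f ∈ S.F) :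
    S.IsEdge f.1 f.2.1 ∧ S.IsEdge f.2.1 f.2.2 ∧ S.IsEdge f.2.2 f.1 := by
  obtain ⟨d1, d2, d3⟩ := S.distinct f hf
  exact ⟨⟨d1, f, hf, by tauto, by tauto⟩, ⟨d2, f, hf, by tauto, by tauto⟩,
    ⟨d3, f, hf, by tauto, by tauto⟩⟩

lemma len_gt_one {w : Fin n → ℝ} (hw : w ∈ S.W) {i j : Fin n} (h : S.IsEdge i j) :
    1 < Real.exp (w i + w j) * Real.cosh (S.l0 i j / 2) := by
  have hc : 0 < Real.cosh (S.l0 i j / 2) := Real.cosh_pos _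
  have h1 : Real.exp (-Real.log (Real.cosh (S.l0 i j / 2))) <
      Real.exp (w i + w j) := Real.exp_lt_exp.2 (hw i j h)
  rw [Real.exp_neg, Real.exp_log hc] at h1
  calc (1:ℝ) = (Real.cosh (S.l0 i j / 2))⁻¹ * Real.cosh (S.l0 i j / 2) := by
        field_simp
    _ < Real.exp (w i + w j) * Real.cosh (S.l0 i j / 2) := by
        exact mul_lt_mul_of_pos_right h1 hc

lemma len_pos {w : Fin n → ℝ} (hw : w ∈ S.W) {i j : Fin n} (h : S.IsEdge i j) :
    0 < S.len w i j := by
  have := _root_.arcosh_pos (S.len_gt_one hw h)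
  unfold len
  linarith

lemma len_symm (w : Fin n → ℝ) (i j : Fin n) : S.len w i j = S.len w j i := by
  unfold len
  rw [add_comm (w i), S.l0_symm]

lemma theta_symm (x y z : ℝ) : theta x y z = theta x z y := by
  unfold theta
  rw [mul_comm (Real.cosh y), mul_comm (Real.sinh y)]

lemma thetaF_symm (w : Fin n → ℝ) (i j k : Fin n) :
    S.thetaF w i j k = S.thetaF w i k j := by
  unfold thetaF
  rw [theta_symm, S.len_symm w j k, S.len_symm w k i, S.len_symm w i j]

lemma thetaF_nonneg {w : Fin n → ℝ} (hw : w ∈ S.W) {a b c : Fin n}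
    (hca : S.IsEdge c a) (hab : S.IsEdge a b) : 0 ≤ S.thetaF w a b c :=
  theta_nonneg (S.len_pos hw hca) (S.len_pos hw hab)

lemma blen_term_nonneg {w : Fin n → ℝ} (hw : w ∈ S.W) (i : Fin n)
    {f : Fin n × Fin n × Fin n} (hf : f ∈ S.F) :
    0 ≤ ((if i = f.1 then S.thetaF w f.1 f.2.1 f.2.2 else 0)
      + (if i = f.2.1 then S.thetaF w f.2.1 f.2.2 f.1 else 0)
      + (if i = f.2.2 then S.thetaF w f.2.2 f.1 f.2.1 else 0)) := by
  obtain ⟨e1, e2, e3⟩ := S.edges_of_face hf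
  have t1 : 0 ≤ S.thetaF w f.1 f.2.1 f.2.2 := S.thetaF_nonneg hw e3 e1
  have t2 : 0 ≤ S.thetaF w f.2.1 f.2.2 f.1 := S.thetaF_nonneg hw e1 e2
  have t3 : 0 ≤ S.thetaF w f.2.2 f.1 f.2.1 := S.thetaF_nonneg hw e2 e3
  have key : ∀ (p : Prop) [Decidable p] (x : ℝ), 0 ≤ x → 0 ≤ if p then x else 0 := by
    intro p _ x hx; split <;> simp [hx]
  exact add_nonneg (add_nonneg (key _ _ t1) (key _ _ t2)) (key _ _ t3)

end IdealTriangulatedSurface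

end Aux

/-- part of the proof of Theorem 2: if `w⁽ᵐ⁾` is a sequence in `W`,
`ijk` is a face of `T` (in some order), and
`w_i⁽ᵐ⁾ + w_j⁽ᵐ⁾ → −log cosh (l⁰_ij/2)` (i.e. `l_ij(w⁽ᵐ⁾) → 0`), then
`θ^i_jk(w⁽ᵐ⁾) → +∞` and consequently `B_i(w⁽ᵐ⁾) → +∞`. -/
theorem stmt_13 {n : ℕ} (hn : 1 ≤ n) (S : IdealTriangulatedSurface n)
    (w : ℕ → (Fin n → ℝ)) (hw : ∀ m, w m ∈ S.W) (i j k : Fin n)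
    (hface : (i, j, k) ∈ S.F ∨ (j, k, i) ∈ S.F ∨ (k, i, j) ∈ S.F ∨
             (i, k, j) ∈ S.F ∨ (k, j, i) ∈ S.F ∨ (j, i, k) ∈ S.F)
    (hlim : Filter.Tendsto (fun m => w m i + w m j) Filter.atTop
      (nhds (-Real.log (Real.cosh (S.l0 i j / 2))))) :
    Filter.Tendsto (fun m => S.thetaF (w m) i j k) Filter.atTop Filter.atTop ∧
    Filter.Tendsto (fun m => S.Blen (w m) i) Filter.atTop Filter.atTop := by
  classical
  -- The three edges of the face
  obtain ⟨eij, ejk, eki⟩ : S.IsEdge i j ∧ S.IsEdge j k ∧ S.IsEdge k i := by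
    rcases hface with h|h|h|h|h|h <;> obtain ⟨a, b, c⟩ := S.edges_of_face h
    · exact ⟨a, b, c⟩
    · exact ⟨c, a, b⟩
    · exact ⟨b, c, a⟩
    · exact ⟨S.isEdge_symm c, S.isEdge_symm b, S.isEdge_symm a⟩
    · exact ⟨S.isEdge_symm b, S.isEdge_symm a, S.isEdge_symm c⟩
    · exact ⟨S.isEdge_symm a, S.isEdge_symm c, S.isEdge_symm b⟩
  have hc : 0 < Real.cosh (S.l0 i j / 2) := Real.cosh_pos _
  -- the coshine of the half-length tends to 1
  have hg : Tendsto (fun m => Real.exp (w m i + w m j) * Real.cosh (S.l0 i j / 2))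
      atTop (nhds 1) := by
    have h1 : Tendsto (fun m => Real.exp (w m i + w m j)) atTop
        (nhds (Real.exp (-Real.log (Real.cosh (S.l0 i j / 2))))) :=
      (Real.continuous_exp.continuousAt.tendsto).comp hlim
    have h2 := h1.mul_const (Real.cosh (S.l0 i j / 2))
    rwa [Real.exp_neg, Real.exp_log hc, inv_mul_cancel₀ hc.ne'] at h2
  -- the deformed length l_ij tends to 0
  have hlen : Tendsto (fun m => S.len (w m) i j) atTop (nhds 0) := by
    have h3 := (_root_.continuousAt_arcosh_one.tendsto.comp hg).const_mul (2 : ℝ)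
    rw [_root_.arcosh_one, mul_zero] at h3
    exact h3
  have hsinh : Tendsto (fun m => Real.sinh (S.len (w m) i j)) atTop
      (nhdsWithin 0 (Set.Ioi 0)) := by
    apply tendsto_nhdsWithin_of_tendsto_nhds_of_eventually_within
    · simpa [Function.comp_def] using (Real.continuous_sinh.continuousAt.tendsto.comp hlen)
    · exact Eventually.of_forall fun m => Real.sinh_pos_iff.2 (S.len_pos (hw m) eij)
  have hinv : Tendsto (fun m => (Real.sinh (S.len (w m) i j))⁻¹) atTop atTop :=
    tendsto_inv_nhdsGT_zero.comp hsinh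
  -- the argument of arcosh in theta diverges
  set arg : ℕ → ℝ := fun m =>
    (Real.cosh (S.len (w m) j k) +
      Real.cosh (S.len (w m) k i) * Real.cosh (S.len (w m) i j)) /
      (Real.sinh (S.len (w m) k i) * Real.sinh (S.len (w m) i j)) with harg_def
  have hbound : ∀ m, (Real.sinh (S.len (w m) i j))⁻¹ ≤ arg m := by
    intro m
    have hb : 0 < Real.sinh (S.len (w m) k i) :=
      Real.sinh_pos_iff.2 (S.len_pos (hw m) eki)
    have hcpos : 0 < Real.sinh (S.len (w m) i j) :=
      Real.sinh_pos_iff.2 (S.len_pos (hw m) eij)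
    simp only [harg_def]
    rw [le_div_iff₀ (mul_pos hb hcpos)]
    have heq : (Real.sinh (S.len (w m) i j))⁻¹ *
        (Real.sinh (S.len (w m) k i) * Real.sinh (S.len (w m) i j)) =
        Real.sinh (S.len (w m) k i) := by
      field_simp
    rw [heq]
    nlinarith [Real.cosh_sub_sinh (S.len (w m) k i), Real.exp_pos (-(S.len (w m) k i)),
      Real.one_le_cosh (S.len (w m) j k), Real.one_le_cosh (S.len (w m) i j),
      Real.cosh_pos (S.len (w m) k i)]
  have harg : Tendsto arg atTop atTop := tendsto_atTop_mono hbound hinv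
  have hθ : Tendsto (fun m => S.thetaF (w m) i j k) atTop atTop := by
    have := _root_.arcosh_tendsto_atTop.comp harg
    exact this
  refine ⟨hθ, ?_⟩
  -- Blen dominates thetaF
  have hB : ∀ m, S.thetaF (w m) i j k ≤ S.Blen (w m) i := by
    intro m
    unfold IdealTriangulatedSurface.Blen
    rcases hface with h|h|h|h|h|h <;>
      refine le_trans ?_
        (Finset.single_le_sum (fun f hf => S.blen_term_nonneg (hw m) i hf) h) <;>
      obtain ⟨d1, d2, d3⟩ := S.distinct _ h
    · simp [d1, Ne.symm d3]
    · simp [d3, Ne.symm d2]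
    · simp [Ne.symm d1, d2]
    · rw [S.thetaF_symm]; simp [d1, Ne.symm d3]
    · rw [S.thetaF_symm]; simp [d3, Ne.symm d2]
    · rw [S.thetaF_symm]; simp [Ne.symm d1, d2]
  exact tendsto_atTop_mono hB hθ
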